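/- arXiv:2411.15088 — 3 statements merged into one kernel-verified Lean document; each statement's English description precedes it below -/
import Mathlib

section
/- The coefficients of the chromatic polynomial of a finite simple graph alternate in sign: if G has n vertices and P_G(λ) = Σ_{i=0}^{n} c_i λ^i, then (−1)^{n−i} c_i ≥ 0 for every i with 0 ≤ i ≤ n. -/
open Polynomial

/-- The number of proper colorings of the finite simple graph `G` with `k` colors. -/
def SimpleGraph.numColorings {V : Type*} [Fintype V] [DecidableEq V]
    (G : SimpleGraph V) [DecidableRel G.Adj] (k : ℕ) : ℕ :=
  Fintype.card {f : V → Fin k // ∀ a b, G.Adj a b → f a ≠ f b}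

section Aux

variable {V : Type*} [Fintype V] [DecidableEq V]

/-- The graph `G` with the edge `a-b` deleted. -/
def delE (G : SimpleGraph V) (a b : V) : SimpleGraph V where
  Adj x y := G.Adj x y ∧ ¬((x = a ∧ y = b) ∨ (x = b ∧ y = a))
  symm := ⟨by
    intro x y ⟨h1, h2⟩
    exact ⟨h1.symm, fun h => h2 (h.elim (fun ⟨p, q⟩ => Or.inr ⟨q, p⟩)
      (fun ⟨p, q⟩ => Or.inl ⟨q, p⟩))⟩⟩
  loopless := ⟨fun x ⟨h, _⟩ => G.irrefl h⟩

instance (G : SimpleGraph V) [DecidableRel G.Adj] (a b : V) :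
    DecidableRel (delE G a b).Adj := fun x y =>
  inferInstanceAs (Decidable (G.Adj x y ∧ ¬((x = a ∧ y = b) ∨ (x = b ∧ y = a))))

/-- The graph `G` with the edge `a-b` contracted: vertex `a` is merged into `b`. -/
def conE (G : SimpleGraph V) (a b : V) : SimpleGraph {x : V // x ≠ a} where
  Adj x y := x ≠ y ∧ (G.Adj x y ∨ (x.1 = b ∧ G.Adj a y) ∨ (y.1 = b ∧ G.Adj a x))
  symm := ⟨by
    intro x y ⟨h1, h2⟩
    exact ⟨h1.symm, h2.elim (fun h => Or.inl h.symm)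
      (fun h => h.elim (fun h => Or.inr (Or.inr h)) (fun h => Or.inr (Or.inl h)))⟩⟩
  loopless := ⟨fun x ⟨h, _⟩ => h rfl⟩

instance (G : SimpleGraph V) [DecidableRel G.Adj] (a b : V) :
    DecidableRel (conE G a b).Adj := fun x y =>
  inferInstanceAs (Decidable (x ≠ y ∧ (G.Adj x.1 y.1 ∨ (x.1 = b ∧ G.Adj a y.1) ∨
    (y.1 = b ∧ G.Adj a x.1))))

lemma delE_le (G : SimpleGraph V) (a b : V) : delE G a b ≤ G := fun _ _ h => h.1

lemma delE_card_lt (G : SimpleGraph V) [DecidableRel G.Adj] {a b : V} (hab : G.Adj a b) :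
    (delE G a b).edgeFinset.card < G.edgeFinset.card := by
  apply Finset.card_lt_card
  rw [Finset.ssubset_iff_of_subset (SimpleGraph.edgeFinset_mono (delE_le G a b))]
  refine ⟨s(a, b), ?_, ?_⟩
  · rw [SimpleGraph.mem_edgeFinset, SimpleGraph.mem_edgeSet]; exact hab
  · rw [SimpleGraph.mem_edgeFinset, SimpleGraph.mem_edgeSet]
    exact fun h => h.2 (Or.inl ⟨rfl, rfl⟩)

/-- Colorings of `delE G a b` with `f a = f b` correspond to colorings of the contraction. -/
def conEquiv (G : SimpleGraph V) [DecidableRel G.Adj] {a b : V} (hab : G.Adj a b) (k : ℕ) :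
    {f : V → Fin k // (∀ x y, (delE G a b).Adj x y → f x ≠ f y) ∧ f a = f b} ≃
    {g : {x : V // x ≠ a} → Fin k // ∀ x y, (conE G a b).Adj x y → g x ≠ g y} where
  toFun f := ⟨fun x => f.1 x.1, by
    rintro x y ⟨hxy, hor⟩
    have hf := f.2.1
    have hfab := f.2.2
    have hxy' : x.1 ≠ y.1 := fun h => hxy (Subtype.ext h)
    rcases hor with h | ⟨hxb, hay⟩ | ⟨hyb, hax⟩
    · refine hf x.1 y.1 ⟨h, ?_⟩
      rintro (⟨h1, _⟩ | ⟨_, h2⟩)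
      · exact x.2 h1
      · exact y.2 h2
    · have : f.1 a ≠ f.1 y.1 := by
        refine hf a y.1 ⟨hay, ?_⟩
        rintro (⟨_, h2⟩ | ⟨h1, _⟩)
        · exact hxy' (by rw [hxb, h2])
        · exact hab.ne h1
      simpa [hxb, ← hfab] using this
    · have : f.1 a ≠ f.1 x.1 := by
        refine hf a x.1 ⟨hax, ?_⟩
        rintro (⟨_, h2⟩ | ⟨h1, _⟩)
        · exact hxy' (by rw [hyb, h2])
        · exact hab.ne h1
      simpa [hyb, ← hfab] using this.symm⟩
  invFun g := ⟨fun x => if h : x = a then g.1 ⟨b, hab.ne'⟩ else g.1 ⟨x, h⟩, by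
    have hg := g.2
    constructor
    · rintro x y ⟨hxy, hnot⟩
      dsimp only
      by_cases hx : x = a
      · have hy : y ≠ a := by intro h; rw [hx, h] at hxy; exact G.irrefl hxy
        have hyb : y ≠ b := fun h => hnot (Or.inl ⟨hx, h⟩)
        rw [dif_pos hx, dif_neg hy]
        refine hg ⟨b, hab.ne'⟩ ⟨y, hy⟩ ⟨?_, Or.inr (Or.inl ⟨rfl, hx ▸ hxy⟩)⟩
        exact fun h => hyb (congrArg Subtype.val h).symm
      · by_cases hy : y = a
        · have hxb : x ≠ b := fun h => hnot (Or.inr ⟨h, hy⟩)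
          rw [dif_neg hx, dif_pos hy]
          refine hg ⟨x, hx⟩ ⟨b, hab.ne'⟩ ⟨?_, Or.inr (Or.inr ⟨rfl, hy ▸ hxy.symm⟩)⟩
          exact fun h => hxb (congrArg Subtype.val h)
        · rw [dif_neg hx, dif_neg hy]
          refine hg ⟨x, hx⟩ ⟨y, hy⟩ ⟨?_, Or.inl hxy⟩
          exact fun h => hxy.ne (congrArg Subtype.val h)
    · dsimp only
      rw [dif_pos rfl, dif_neg hab.ne']⟩
  left_inv f := by
    apply Subtype.ext
    funext x
    by_cases hx : x = a
    · simp only [dif_pos hx]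
      rw [hx, f.2.2]
    · simp only [dif_neg hx]
  right_inv g := by
    apply Subtype.ext
    funext x
    simp only [dif_neg x.2]

/-- The deletion–contraction counting identity. -/
lemma count_split (G : SimpleGraph V) [DecidableRel G.Adj] {a b : V} (hab : G.Adj a b) (k : ℕ) :
    (delE G a b).numColorings k = G.numColorings k + (conE G a b).numColorings k := by
  classical
  unfold SimpleGraph.numColorings
  set p : (V → Fin k) → Prop := fun f => ∀ x y, (delE G a b).Adj x y → f x ≠ f y with hp
  set q : (V → Fin k) → Prop := fun f => f a = f b with hq
  have hsplit : Fintype.card {f : V → Fin k // p f} =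
      Fintype.card {f : V → Fin k // p f ∧ ¬ q f} +
      Fintype.card {f : V → Fin k // p f ∧ q f} := by
    rw [Fintype.card_congr (Equiv.sumCompl fun x : {f // p f} => q x.1).symm,
      Fintype.card_sum, Nat.add_comm,
      Fintype.card_congr (Equiv.subtypeSubtypeEquivSubtypeInter p q),
      Fintype.card_congr (Equiv.subtypeSubtypeEquivSubtypeInter p (fun f => ¬ q f))]
  rw [hsplit]
  congr 1
  · apply Fintype.card_congr
    apply Equiv.subtypeEquivRight
    intro f
    constructor
    · rintro ⟨hf, hfab⟩ x y hxy
      by_cases hc : (x = a ∧ y = b) ∨ (x = b ∧ y = a)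
      · rcases hc with ⟨rfl, rfl⟩ | ⟨rfl, rfl⟩
        · exact hfab
        · exact fun h => hfab h.symm
      · exact hf x y ⟨hxy, hc⟩
    · intro hf
      exact ⟨fun x y hxy => hf x y hxy.1, hf a b hab⟩
  · exact Fintype.card_congr (conEquiv G hab k)

lemma numColorings_bot (G : SimpleGraph V) [DecidableRel G.Adj]
    (h : ∀ x y, ¬ G.Adj x y) (k : ℕ) :
    G.numColorings k = k ^ Fintype.card V := by
  unfold SimpleGraph.numColorings
  rw [Fintype.card_congr (Equiv.subtypeUnivEquiv fun f => by
    intro x y hxy; exact absurd hxy (h x y))]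
  simp [Fintype.card_fun]

lemma key : ∀ (n : ℕ) (m : ℕ) (V : Type u) [Fintype V] [DecidableEq V]
    (G : SimpleGraph V) [DecidableRel G.Adj], Fintype.card V = n →
    G.edgeFinset.card = m →
    ∃ P : Polynomial ℤ, (∀ i ≤ n, 0 ≤ (-1) ^ (n - i) * P.coeff i) ∧
      (∀ i, n < i → P.coeff i = 0) ∧
      ∀ k : ℕ, P.eval (k : ℤ) = G.numColorings k := by
  intro n
  induction n using Nat.strong_induction_on with
  | _ n ihn =>
  intro m
  induction m using Nat.strong_induction_on with
  | _ m ihm =>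
  intro V _ _ G _ hn hm
  by_cases hE : G.edgeFinset = ∅
  · -- no edges: P = X ^ n
    have hno : ∀ x y, ¬ G.Adj x y := by
      intro x y hxy
      have : s(x, y) ∈ G.edgeFinset := by
        rw [SimpleGraph.mem_edgeFinset, SimpleGraph.mem_edgeSet]; exact hxy
      simp [hE] at this
    refine ⟨X ^ n, ?_, ?_, ?_⟩
    · intro i hi
      rw [coeff_X_pow]
      rcases eq_or_ne i n with rfl | h
      · simp
      · simp [h]
    · intro i hi
      rw [coeff_X_pow, if_neg (by omega : ¬ i = n)]
    · intro k
      rw [numColorings_bot G hno, hn]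
      push_cast
      simp
  · -- pick an edge
    obtain ⟨e, he⟩ := Finset.nonempty_iff_ne_empty.mpr hE
    induction e using Sym2.ind with
    | _ a b =>
    have hab : G.Adj a b := by rwa [SimpleGraph.mem_edgeFinset, SimpleGraph.mem_edgeSet] at he
    have hn1 : 1 ≤ n := by
      rw [← hn]
      exact Fintype.card_pos_iff.mpr ⟨a⟩
    -- deletion
    have hdel_lt : (delE G a b).edgeFinset.card < m := hm ▸ delE_card_lt G hab
    obtain ⟨Pd, hPd1, hPd2, hPd3⟩ :=
      ihm (delE G a b).edgeFinset.card hdel_lt V (delE G a b) hn rfl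
    -- contraction
    have hcard : Fintype.card {x : V // x ≠ a} = n - 1 := by
      rw [← hn]
      simp [Fintype.card_subtype_compl, Fintype.card_subtype_eq]
    obtain ⟨Pc, hPc1, hPc2, hPc3⟩ :=
      ihn (n - 1) (by omega) (conE G a b).edgeFinset.card {x : V // x ≠ a}
        (conE G a b) hcard rfl
    refine ⟨Pd - Pc, ?_, ?_, ?_⟩
    · intro i hi
      rw [coeff_sub, mul_sub]
      have h1 : 0 ≤ (-1 : ℤ) ^ (n - i) * Pd.coeff i := hPd1 i hi
      have h2 : (-1 : ℤ) ^ (n - i) * Pc.coeff i ≤ 0 := by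
        by_cases hi' : i ≤ n - 1
        · have hni : n - i = (n - 1 - i) + 1 := by omega
          have := hPc1 i hi'
          rw [hni, pow_succ]
          nlinarith
        · have : Pc.coeff i = 0 := hPc2 i (by omega)
          simp [this]
      linarith
    · intro i hi
      rw [coeff_sub, hPd2 i hi, hPc2 i (by omega), sub_zero]
    · intro k
      rw [eval_sub, hPd3 k, hPc3 k, count_split G hab k]
      push_cast
      ring

end Aux

/-- The coefficients of the chromatic polynomial of a finite simple graph alternate in
sign: if `G` has `n` vertices and `P_G(λ) = Σ_{i=0}^{n} c_i λ^i`, then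
`(−1)^{n−i} c_i ≥ 0` for every `0 ≤ i ≤ n`. -/
theorem chromaticPolynomial_coeff_alternate {V : Type*} [Fintype V] [DecidableEq V]
    (G : SimpleGraph V) [DecidableRel G.Adj] (P : Polynomial ℤ)
    (hP : ∀ k : ℕ, P.eval (k : ℤ) = G.numColorings k) :
    ∀ i ≤ Fintype.card V, 0 ≤ (-1) ^ (Fintype.card V - i) * P.coeff i := by
  obtain ⟨P₀, h1, _, h3⟩ := key (Fintype.card V) G.edgeFinset.card V G rfl rfl
  have hPP : P = P₀ := by
    have hsub : P - P₀ = 0 := by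
      apply Polynomial.eq_zero_of_infinite_isRoot
      have hinf : (Set.range (Nat.cast : ℕ → ℤ)).Infinite :=
        Set.infinite_range_of_injective Nat.cast_injective
      refine hinf.mono ?_
      rintro x ⟨k, rfl⟩
      simp only [Set.mem_setOf_eq, IsRoot.def, eval_sub, hP k, h3 k, sub_self]
    have := sub_eq_zero.mp hsub
    exact this
  rw [hPP]
  exact h1
end

section
/- For a finite simple graph G with n vertices and m edges, every coefficient of the chromatic polynomial is bounded in absolute value by a binomial coefficient: writing P_G(λ) = Σ_{i=0}^{n} c_{n−i} λ^{n−i}, one has |c_{n−i}| ≤ C(m, i) for all 0 ≤ i ≤ n, where C(m, i) denotes the binomial coefficient m choose i. -/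
open Polynomial

namespace ChromAux

open SimpleGraph

variable {V : Type*} [Fintype V] [DecidableEq V]

/-- Delete the edge `s(u,v)` from `G`. -/
def delGraph (G : SimpleGraph V) (u v : V) : SimpleGraph V where
  Adj a b := G.Adj a b ∧ s(a, b) ≠ s(u, v)
  symm := ⟨fun a b h => ⟨h.1.symm, by rw [Sym2.eq_swap]; exact h.2⟩⟩
  loopless := ⟨fun a h => G.loopless.irrefl a h.1⟩

instance (G : SimpleGraph V) [DecidableRel G.Adj] (u v : V) :
    DecidableRel (delGraph G u v).Adj := fun _ _ => instDecidableAnd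

/-- Contract the edge `s(u,v)` of `G`, merging `v` into `u`. -/
def conGraph (G : SimpleGraph V) (u v : V) : SimpleGraph {x : V // x ≠ v} where
  Adj a b := a.1 ≠ b.1 ∧ (G.Adj a.1 b.1 ∨ (a.1 = u ∧ G.Adj v b.1) ∨ (b.1 = u ∧ G.Adj a.1 v))
  symm := ⟨fun a b h => ⟨h.1.symm, by
    rcases h.2 with h | ⟨h1, h2⟩ | ⟨h1, h2⟩
    · exact Or.inl h.symm
    · exact Or.inr (Or.inr ⟨h1, h2.symm⟩)
    · exact Or.inr (Or.inl ⟨h1, h2.symm⟩)⟩⟩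
  loopless := ⟨fun a h => h.1 rfl⟩

instance (G : SimpleGraph V) [DecidableRel G.Adj] (u v : V) :
    DecidableRel (conGraph G u v).Adj := fun _ _ => instDecidableAnd

lemma delGraph_edgeFinset (G : SimpleGraph V) [DecidableRel G.Adj] (u v : V) :
    (delGraph G u v).edgeFinset = G.edgeFinset.erase s(u, v) := by
  ext e
  induction e using Sym2.ind with
  | _ a b =>
    simp only [mem_edgeFinset, Finset.mem_erase, mem_edgeSet]
    constructor
    · rintro ⟨h1, h2⟩; exact ⟨h2, h1⟩
    · rintro ⟨h1, h2⟩; exact ⟨h2, h1⟩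

lemma delGraph_card (G : SimpleGraph V) [DecidableRel G.Adj] {u v : V} (h : G.Adj u v) :
    (delGraph G u v).edgeFinset.card = G.edgeFinset.card - 1 := by
  rw [delGraph_edgeFinset, Finset.card_erase_of_mem (by simpa using h)]

def conMap (G : SimpleGraph V) [DecidableRel G.Adj] (u v : V) :
    Sym2 {x : V // x ≠ v} → Sym2 V :=
  Sym2.lift ⟨fun a b =>
    if G.Adj a.1 b.1 then s(a.1, b.1)
    else if a.1 = u then s(v, b.1)
    else if b.1 = u then s(a.1, v)
    else s(a.1, b.1), by
    intro a b
    dsimp only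
    by_cases h : G.Adj a.1 b.1
    · rw [if_pos h, if_pos h.symm, Sym2.eq_swap]
    · have h' : ¬ G.Adj b.1 a.1 := fun hh => h hh.symm
      rw [if_neg h, if_neg h']
      by_cases ha : a.1 = u
      · by_cases hb : b.1 = u
        · rw [if_pos ha, if_pos hb, ha, hb]
        · rw [if_pos ha, if_neg hb, if_pos ha, Sym2.eq_swap]
      · by_cases hb : b.1 = u
        · rw [if_neg ha, if_pos hb, if_pos hb, Sym2.eq_swap]
        · rw [if_neg ha, if_neg hb, if_neg hb, if_neg ha, Sym2.eq_swap]⟩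

lemma conMap_spec (G : SimpleGraph V) [DecidableRel G.Adj] {u v : V} (huv : G.Adj u v)
    {x y : {x : V // x ≠ v}} (hxy : (conGraph G u v).Adj x y) :
    (G.Adj x.1 y.1 ∧ conMap G u v s(x, y) = s(x.1, y.1)) ∨
    (∃ w : V, ∃ hw : w ≠ v, w ≠ u ∧ G.Adj v w ∧ conMap G u v s(x, y) = s(v, w) ∧
      s(x, y) = s((⟨u, G.ne_of_adj huv⟩ : {x : V // x ≠ v}), ⟨w, hw⟩)) := by
  obtain ⟨hne, hc⟩ := hxy
  by_cases h : G.Adj x.1 y.1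
  · exact Or.inl ⟨h, by simp only [conMap, Sym2.lift_mk, if_pos h]⟩
  · rcases hc with hc | ⟨hx, hvy⟩ | ⟨hy, hxv⟩
    · exact absurd hc h
    · have hyu : y.1 ≠ u := fun hh => hne (hx.trans hh.symm)
      refine Or.inr ⟨y.1, y.2, hyu, hvy, ?_, ?_⟩
      · simp only [conMap, Sym2.lift_mk]
        rw [if_neg h, if_pos hx]
      · have hx' : x = ⟨u, G.ne_of_adj huv⟩ := Subtype.ext hx
        rw [hx']
    · have hxu : x.1 ≠ u := fun hh => hne (hh.trans hy.symm)
      refine Or.inr ⟨x.1, x.2, hxu, hxv.symm, ?_, ?_⟩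
      · simp only [conMap, Sym2.lift_mk]
        rw [if_neg h, if_neg hxu, if_pos hy, Sym2.eq_swap]
      · have hy' : y = ⟨u, G.ne_of_adj huv⟩ := Subtype.ext hy
        rw [hy', Sym2.eq_swap]

lemma conGraph_card_le (G : SimpleGraph V) [DecidableRel G.Adj] {u v : V} (huv : G.Adj u v) :
    (conGraph G u v).edgeFinset.card ≤ (delGraph G u v).edgeFinset.card := by
  classical
  apply Finset.card_le_card_of_injOn (conMap G u v)
  · intro e he
    induction e using Sym2.ind with
    | _ a b =>
      rw [Finset.mem_coe, mem_edgeFinset, mem_edgeSet] at he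
      rw [Finset.mem_coe, mem_edgeFinset]
      rcases conMap_spec G huv he with ⟨h1, h2⟩ | ⟨w, hwv, hwu, hvw, h2, _⟩
      · rw [h2, mem_edgeSet]
        refine ⟨h1, ?_⟩
        intro hcontra
        rcases Sym2.eq_iff.mp hcontra with ⟨e1, e2⟩ | ⟨e1, e2⟩
        · exact b.2 e2
        · exact a.2 e1
      · rw [h2, mem_edgeSet]
        refine ⟨hvw, ?_⟩
        intro hcontra
        rcases Sym2.eq_iff.mp hcontra with ⟨e1, e2⟩ | ⟨e1, e2⟩
        · exact (G.ne_of_adj huv) e1.symm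
        · exact hwu e2
  · intro e he e' he' heq
    simp only [Finset.coe_sort_coe, Finset.mem_coe, mem_edgeFinset, mem_edgeSet] at he he'
    induction e using Sym2.ind with
    | _ a b =>
    induction e' using Sym2.ind with
    | _ c d =>
      rw [mem_edgeSet] at he he'
      rcases conMap_spec G huv he with ⟨h1, h2⟩ | ⟨w, hwv, hwu, hvw, h2, h3⟩ <;>
        rcases conMap_spec G huv he' with ⟨g1, g2⟩ | ⟨w', hwv', hwu', hvw', g2, g3⟩
      · rw [h2, g2, Sym2.eq_iff] at heq
        rw [Sym2.eq_iff]
        rcases heq with ⟨e1, e2⟩ | ⟨e1, e2⟩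
        · exact Or.inl ⟨Subtype.ext e1, Subtype.ext e2⟩
        · exact Or.inr ⟨Subtype.ext e1, Subtype.ext e2⟩
      · rw [h2, g2, Sym2.eq_iff] at heq
        rcases heq with ⟨e1, e2⟩ | ⟨e1, e2⟩
        · exact absurd e1 a.2
        · exact absurd e2 b.2
      · rw [h2, g2, Sym2.eq_iff] at heq
        rcases heq with ⟨e1, e2⟩ | ⟨e1, e2⟩
        · exact absurd e1.symm c.2
        · exact absurd e1.symm d.2
      · rw [h2, g2, Sym2.eq_iff] at heq
        have hww : w = w' := by
          rcases heq with ⟨e1, e2⟩ | ⟨e1, e2⟩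
          · exact e2
          · exact absurd e1.symm hwv'
        subst hww
        rw [h3, g3]

/-- properness for `G` = properness for the deletion plus `f u ≠ f v`. -/
lemma proper_iff (G : SimpleGraph V) {u v : V} (huv : G.Adj u v) {k : ℕ} (f : V → Fin k) :
    (∀ a b, G.Adj a b → f a ≠ f b) ↔
      (∀ a b, (delGraph G u v).Adj a b → f a ≠ f b) ∧ f u ≠ f v := by
  constructor
  · intro h
    exact ⟨fun a b hab => h a b hab.1, h u v huv⟩
  · rintro ⟨h1, h2⟩ a b hab
    by_cases he : s(a, b) = s(u, v)
    · rcases Sym2.eq_iff.mp he with ⟨e1, e2⟩ | ⟨e1, e2⟩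
      · rw [e1, e2]; exact h2
      · rw [e1, e2]; exact fun hh => h2 hh.symm
    · exact h1 a b ⟨hab, he⟩

/-- colorings of the contraction correspond to colorings of the deletion with `f u = f v`. -/
def conColorEquiv (G : SimpleGraph V) {u v : V} (huv : G.Adj u v) (k : ℕ) :
    {f : V → Fin k // (∀ a b, (delGraph G u v).Adj a b → f a ≠ f b) ∧ f u = f v} ≃
    {g : {x : V // x ≠ v} → Fin k // ∀ a b, (conGraph G u v).Adj a b → g a ≠ g b} where
  toFun f := ⟨fun x => f.1 x.1, by
    rintro a b ⟨hne, hc⟩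
    rcases hc with h | ⟨ha, hvb⟩ | ⟨hb, hav⟩
    · refine f.2.1 a.1 b.1 ⟨h, ?_⟩
      intro hcontra
      rcases Sym2.eq_iff.mp hcontra with ⟨e1, e2⟩ | ⟨e1, e2⟩
      · exact b.2 e2
      · exact a.2 e1
    · have hbu : b.1 ≠ u := fun hh => hne (ha.trans hh.symm)
      have : f.1 v ≠ f.1 b.1 := by
        refine f.2.1 v b.1 ⟨hvb, ?_⟩
        intro hcontra
        rcases Sym2.eq_iff.mp hcontra with ⟨e1, e2⟩ | ⟨e1, e2⟩
        · exact (G.ne_of_adj huv) e1.symm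
        · exact hbu e2
      simpa [ha, f.2.2] using this
    · have hau : a.1 ≠ u := fun hh => hne (hh.trans hb.symm)
      have : f.1 a.1 ≠ f.1 v := by
        refine f.2.1 a.1 v ⟨hav, ?_⟩
        intro hcontra
        rcases Sym2.eq_iff.mp hcontra with ⟨e1, e2⟩ | ⟨e1, e2⟩
        · exact hau e1
        · exact (G.ne_of_adj huv) e2.symm
      simpa [hb, f.2.2] using this⟩
  invFun g := ⟨fun x => if h : x = v then g.1 ⟨u, G.ne_of_adj huv⟩ else g.1 ⟨x, h⟩, by
    constructor
    · rintro a b ⟨hab, hne⟩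
      dsimp only
      have hab' : a ≠ b := G.ne_of_adj (by exact hab)
      by_cases hav : a = v
      · have hbv : b ≠ v := fun hh => hab' (hav.trans hh.symm)
        have hbu : b ≠ u := by
          intro hh
          exact hne (by rw [hav, hh, Sym2.eq_swap])
        rw [dif_pos hav, dif_neg hbv]
        refine g.2 ⟨u, G.ne_of_adj huv⟩ ⟨b, hbv⟩ ⟨fun hh => hbu hh.symm, ?_⟩
        exact Or.inr (Or.inl ⟨rfl, hav ▸ hab⟩)
      · by_cases hbv : b = v
        · have hau : a ≠ u := by
            intro hh
            exact hne (by rw [hbv, hh])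
          rw [dif_neg hav, dif_pos hbv]
          refine g.2 ⟨a, hav⟩ ⟨u, G.ne_of_adj huv⟩ ⟨hau, ?_⟩
          exact Or.inr (Or.inr ⟨rfl, hbv ▸ hab⟩)
        · rw [dif_neg hav, dif_neg hbv]
          exact g.2 ⟨a, hav⟩ ⟨b, hbv⟩ ⟨hab', Or.inl hab⟩
    · dsimp only
      rw [dif_pos rfl, dif_neg (G.ne_of_adj huv)]⟩
  left_inv f := by
    apply Subtype.ext
    funext x
    dsimp only
    by_cases h : x = v
    · rw [dif_pos h, h, f.2.2]
    · rw [dif_neg h]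
  right_inv g := by
    apply Subtype.ext
    funext x
    have : x.1 ≠ v := x.2
    dsimp only
    rw [dif_neg this]

lemma numColorings_del (G : SimpleGraph V) [DecidableRel G.Adj] {u v : V} (huv : G.Adj u v)
    (k : ℕ) :
    (delGraph G u v).numColorings k =
      G.numColorings k + (conGraph G u v).numColorings k := by
  classical
  have h1 : (delGraph G u v).numColorings k =
      Fintype.card {f : V → Fin k // (∀ a b, (delGraph G u v).Adj a b → f a ≠ f b) ∧ f u ≠ f v}
      + Fintype.card {f : V → Fin k //
          (∀ a b, (delGraph G u v).Adj a b → f a ≠ f b) ∧ f u = f v} := by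
    rw [SimpleGraph.numColorings, Fintype.card_subtype, Fintype.card_subtype,
      Fintype.card_subtype]
    rw [show ∀ s t r : Finset (V → Fin k), s.card = t.card + r.card ↔
      t.card + r.card = s.card from fun _ _ _ => eq_comm]
    rw [← Finset.card_filter_add_card_filter_not
      (s := Finset.univ.filter (fun f : V → Fin k => ∀ a b, (delGraph G u v).Adj a b → f a ≠ f b))
      (fun f => f u ≠ f v)]
    rw [Finset.filter_filter, Finset.filter_filter]
    congr 1
    · congr 1
      ext f
      simp only [ne_eq, not_not]
  have h2 : Fintype.card {f : V → Fin k //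
      (∀ a b, (delGraph G u v).Adj a b → f a ≠ f b) ∧ f u ≠ f v} = G.numColorings k := by
    rw [SimpleGraph.numColorings]
    apply Fintype.card_congr
    apply Equiv.subtypeEquivRight
    intro f
    exact (proper_iff G huv f).symm
  have h3 : Fintype.card {f : V → Fin k //
      (∀ a b, (delGraph G u v).Adj a b → f a ≠ f b) ∧ f u = f v} =
      (conGraph G u v).numColorings k := by
    rw [SimpleGraph.numColorings]
    exact Fintype.card_congr (conColorEquiv G huv k)
  rw [h1, h2, h3]

theorem poly_eq_of_eval_nat (P Q : ℤ[X]) (h : ∀ k : ℕ, P.eval (k : ℤ) = Q.eval (k : ℤ)) :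
    P = Q := by
  have h0 : P - Q = 0 := by
    apply Polynomial.eq_zero_of_infinite_isRoot
    apply Set.infinite_of_injective_forall_mem (f := fun k : ℕ => (k : ℤ))
    · intro a b hab
      have hab' : (a : ℤ) = (b : ℤ) := hab
      exact_mod_cast hab'
    · intro k
      simp [Polynomial.IsRoot, h k]
  exact sub_eq_zero.mp h0

universe u

theorem exists_chrom (m : ℕ) :
    ∀ {V : Type u} [Fintype V] [DecidableEq V] (G : SimpleGraph V) [DecidableRel G.Adj],
      G.edgeFinset.card ≤ m →
      ∃ P : ℤ[X], (∀ k : ℕ, P.eval (k : ℤ) = G.numColorings k) ∧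
        P.natDegree ≤ Fintype.card V ∧
        ∀ i ≤ Fintype.card V,
          0 ≤ (-1 : ℤ) ^ i * P.coeff (Fintype.card V - i) ∧
          (-1 : ℤ) ^ i * P.coeff (Fintype.card V - i) ≤ (Nat.choose m i : ℤ) := by
  induction m with
  | zero =>
    intro V _ _ G _ hm
    have hadj : ∀ a b : V, ¬ G.Adj a b := by
      intro a b hab
      have hmem : s(a, b) ∈ G.edgeFinset := by
        rw [mem_edgeFinset, mem_edgeSet]; exact hab
      have he : G.edgeFinset = ∅ := Finset.card_eq_zero.mp (le_antisymm hm (Nat.zero_le _))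
      rw [he] at hmem
      exact absurd hmem (Finset.notMem_empty _)
    refine ⟨Polynomial.X ^ Fintype.card V, ?_, ?_, ?_⟩
    · intro k
      have hc : G.numColorings k = k ^ Fintype.card V := by
        rw [SimpleGraph.numColorings,
          Fintype.card_congr (Equiv.subtypeUnivEquiv (fun f a b h => absurd h (hadj a b))),
          Fintype.card_fun, Fintype.card_fin]
      rw [hc]
      push_cast
      simp
    · exact le_of_eq (natDegree_X_pow _)
    · intro i hi
      rcases Nat.eq_zero_or_pos i with hi0 | hi0
      · subst hi0
        simp [coeff_X_pow]
      · have hne : Fintype.card V - i ≠ Fintype.card V := by omega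
        rw [coeff_X_pow, if_neg hne]
        simp
  | succ m ih =>
    intro V _ _ G _ hm
    by_cases hle : G.edgeFinset.card ≤ m
    · obtain ⟨P, h1, h2, h3⟩ := ih G hle
      refine ⟨P, h1, h2, fun i hi => ⟨(h3 i hi).1, le_trans (h3 i hi).2 ?_⟩⟩
      exact_mod_cast Nat.choose_le_choose i (Nat.le_succ m)
    · obtain ⟨e, he⟩ := Finset.card_pos.mp (by omega : 0 < G.edgeFinset.card)
      revert he
      induction e using Sym2.ind with
      | _ u v =>
      intro he
      have huv : G.Adj u v := (G.mem_edgeSet).mp (mem_edgeFinset.mp he)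
      have hnuv := G.ne_of_adj huv
      have hVpos : 0 < Fintype.card V := Fintype.card_pos_iff.mpr ⟨v⟩
      have hcard1 : (delGraph G u v).edgeFinset.card ≤ m := by
        rw [delGraph_card G huv]; omega
      have hcard2 : (conGraph G u v).edgeFinset.card ≤ m :=
        le_trans (conGraph_card_le G huv) hcard1
      obtain ⟨P₁, e₁, d₁, b₁⟩ := ih (delGraph G u v) hcard1
      obtain ⟨P₂, e₂, d₂, b₂⟩ := ih (conGraph G u v) hcard2
      have hV' : Fintype.card {x : V // x ≠ v} = Fintype.card V - 1 := by
        have h1 : Fintype.card {x : V // ¬ x = v} =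
            Fintype.card V - Fintype.card {x : V // x = v} :=
          Fintype.card_subtype_compl _
        rw [h1, Fintype.card_subtype_eq]
      rw [hV'] at d₂ b₂
      refine ⟨P₁ - P₂, ?_, ?_, ?_⟩
      · intro k
        have hsum := numColorings_del G huv k
        rw [Polynomial.eval_sub, e₁, e₂, hsum]
        push_cast
        ring
      · exact le_trans (natDegree_sub_le _ _) (max_le d₁ (le_trans d₂ (by omega)))
      · intro i hi
        rcases i with _ | j
        · have hz : P₂.coeff (Fintype.card V) = 0 :=
            coeff_eq_zero_of_natDegree_lt (lt_of_le_of_lt d₂ (by omega))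
          simp only [pow_zero, one_mul, Nat.sub_zero, Polynomial.coeff_sub, hz, sub_zero]
          have hb := b₁ 0 (Nat.zero_le _)
          simp only [pow_zero, one_mul, Nat.sub_zero, Nat.choose_zero_right] at hb ⊢
          exact_mod_cast hb
        · have hidx : Fintype.card V - (j + 1) = Fintype.card V - 1 - j := by omega
          have hb1 := b₁ (j + 1) hi
          have hb2 := b₂ j (by omega)
          rw [hidx] at hb1
          rw [Polynomial.coeff_sub, hidx]
          have expand : (-1 : ℤ) ^ (j + 1) *
              (P₁.coeff (Fintype.card V - 1 - j) - P₂.coeff (Fintype.card V - 1 - j)) =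
              (-1) ^ (j + 1) * P₁.coeff (Fintype.card V - 1 - j) +
              (-1) ^ j * P₂.coeff (Fintype.card V - 1 - j) := by
            rw [pow_succ]
            ring
          rw [expand]
          constructor
          · exact add_nonneg hb1.1 hb2.1
          · have hpascal : Nat.choose (m + 1) (j + 1) = Nat.choose m j + Nat.choose m (j + 1) :=
              Nat.choose_succ_succ m j
            have h2 := hb1.2
            have h3 := hb2.2
            rw [hpascal]
            push_cast
            linarith

end ChromAux

/-- For a finite simple graph `G` with `n` vertices and `m` edges, every coefficient of
the chromatic polynomial satisfies `|c_{n−i}| ≤ C(m, i)` for `0 ≤ i ≤ n`. -/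
theorem chromaticPolynomial_coeff_le_choose {V : Type*} [Fintype V] [DecidableEq V]
    (G : SimpleGraph V) [DecidableRel G.Adj] (P : Polynomial ℤ)
    (hP : ∀ k : ℕ, P.eval (k : ℤ) = G.numColorings k) :
    ∀ i ≤ Fintype.card V,
      |P.coeff (Fintype.card V - i)| ≤ (G.edgeFinset.card.choose i : ℤ) := by
  intro i hi
  obtain ⟨Q, hQ, -, hb⟩ := ChromAux.exists_chrom G.edgeFinset.card G le_rfl
  have hPQ : P = Q := ChromAux.poly_eq_of_eval_nat P Q (fun k => by rw [hP k, hQ k])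
  subst hPQ
  obtain ⟨h1, h2⟩ := hb i hi
  have habs : |P.coeff (Fintype.card V - i)| = (-1 : ℤ) ^ i * P.coeff (Fintype.card V - i) := by
    rw [← abs_of_nonneg h1, abs_mul, abs_pow, abs_neg, abs_one, one_pow, one_mul]
  rw [habs]
  exact h2
end

section
/- Turán's theorem: for natural numbers n and r with 0 < r, if G is a simple graph on n vertices that contains no clique of size r + 1 (no set of r + 1 pairwise adjacent vertices), then the number of edges of G is at most the number of edges of the Turán graph T(n, r). -/
open SimpleGraph

/-- Turán's theorem: if `G` is a simple graph on `n` vertices containing no clique of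
size `r + 1` (with `0 < r`), then the number of edges of `G` is at most the number of
edges of the Turán graph `T(n, r)`. -/
theorem turan_theorem {n r : ℕ} (hr : 0 < r) {V : Type*} [Fintype V] [DecidableEq V]
    (G : SimpleGraph V) [DecidableRel G.Adj] (hV : Fintype.card V = n)
    (hfree : G.CliqueFree (r + 1)) :
    G.edgeFinset.card ≤ (turanGraph n r).edgeFinset.card := by
  classical
  let e : V ≃ Fin n := Fintype.equivFinOfCardEq hV
  let G' : SimpleGraph (Fin n) := G.map e.toEmbedding
  have iso : G ≃g G' := SimpleGraph.Iso.map e G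
  have hfree' : G'.CliqueFree (r + 1) :=
    hfree.comap iso.symm.toEmbedding.isContained
  have h := (isTuranMaximal_turanGraph (n := n) hr).2 (G' := G') hfree'
  rwa [iso.card_edgeFinset_eq]
end
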